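/- Fix n ≥ 2, i ∈ {1,…,n−1}, and constants c, r > 0 with r > c. Let Cᵢⁿ = {x ∈ ℝⁿ : (x_{i+1}+c)² + x_{i+2}² + ⋯ + x_n² ≤ r²}. Then the facial dimension signature of Cᵢⁿ is exactly {i, n}, and every proper face of Cᵢⁿ is of the form ℝⁱ ⊕ {x̄} for a point x̄ on the boundary sphere of the (n−i)-dimensional ball of radius r centered at −c·e₁, and is exposed. -/

import Mathlib

open Set Metric RealInnerProductSpace

variable {E : Type*} [NormedAddCommGroup E] [NormedSpace ℝ E]

/-- A face of a convex set: a convex subset `F` of `C` such that any open segment of `C`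
meeting `F` has both endpoints in `F`. -/
def IsFace (C F : Set E) : Prop := Convex ℝ F ∧ IsExtreme ℝ C F

/-- Dimension of a convex set: the dimension of its affine hull. -/
noncomputable def sdim (S : Set E) : ℕ := Module.finrank ℝ (affineSpan ℝ S).direction

/-- The facial dimension signature: the set of dimensions of nonempty faces. -/
def faceDimSig (C : Set E) : Set ℕ :=
  {d | ∃ F : Set E, IsFace C F ∧ F.Nonempty ∧ sdim F = d}

/-- The minimal face of `C` containing `x`. -/
def minFace (C : Set E) (x : E) : Set E := ⋂₀ {F | IsFace C F ∧ x ∈ F}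

/-- The cylindrical set Cᵢⁿ (0-based index `i` corresponds to the paper coordinate `i+1`). -/
def Cyl (n : ℕ) (c r : ℝ) (i : Fin n) : Set (EuclideanSpace ℝ (Fin n)) :=
  {x | (x i + c) ^ 2 + ∑ j ∈ Finset.Ioi i, (x j) ^ 2 ≤ r ^ 2}

namespace CylAux

variable {n : ℕ}

/-- The quadratic function defining the cylinder. -/
def qf (c : ℝ) (I : Fin n) (x : EuclideanSpace ℝ (Fin n)) : ℝ :=
  (x I + c) ^ 2 + ∑ j ∈ Finset.Ioi I, (x j) ^ 2

lemma mem_cyl {c r : ℝ} {I : Fin n} {x : EuclideanSpace ℝ (Fin n)} :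
    x ∈ Cyl n c r I ↔ qf c I x ≤ r ^ 2 := Iff.rfl

/-- The squared "distance" between two points in the constrained coordinates. -/
def df (I : Fin n) (x y : EuclideanSpace ℝ (Fin n)) : ℝ :=
  (x I - y I) ^ 2 + ∑ j ∈ Finset.Ioi I, (x j - y j) ^ 2

lemma df_nonneg (I : Fin n) (x y : EuclideanSpace ℝ (Fin n)) : 0 ≤ df I x y := by
  have : 0 ≤ ∑ j ∈ Finset.Ioi I, (x j - y j) ^ 2 :=
    Finset.sum_nonneg fun j _ => sq_nonneg _
  have := sq_nonneg (x I - y I)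
  unfold df; linarith

lemma df_eq_zero {I : Fin n} {x y : EuclideanSpace ℝ (Fin n)} (h : df I x y = 0) :
    ∀ j, I ≤ j → x j = y j := by
  have h1 : 0 ≤ ∑ j ∈ Finset.Ioi I, (x j - y j) ^ 2 :=
    Finset.sum_nonneg fun j _ => sq_nonneg _
  have h2 := sq_nonneg (x I - y I)
  have hI : (x I - y I) ^ 2 = 0 := by unfold df at h; linarith
  have hs : ∑ j ∈ Finset.Ioi I, (x j - y j) ^ 2 = 0 := by unfold df at h; linarith
  intro j hj
  rcases eq_or_lt_of_le hj with h | h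
  · subst h; have := pow_eq_zero_iff (n := 2) (by norm_num) |>.1 hI; linarith
  · have := (Finset.sum_eq_zero_iff_of_nonneg (fun j _ => sq_nonneg (x j - y j))).1 hs j
      (Finset.mem_Ioi.2 h)
    have := pow_eq_zero_iff (n := 2) (by norm_num) |>.1 this
    linarith

lemma qf_combo (c : ℝ) (I : Fin n) {a b : ℝ} (hab : a + b = 1)
    (x y : EuclideanSpace ℝ (Fin n)) :
    qf c I (a • x + b • y) = a * qf c I x + b * qf c I y - a * b * df I x y := by
  have hb : b = 1 - a := by linarith
  subst hb
  simp only [qf, df, PiLp.add_apply, PiLp.smul_apply, smul_eq_mul]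
  have hs : ∑ j ∈ Finset.Ioi I, (a * x j + (1 - a) * y j) ^ 2
      = ∑ j ∈ Finset.Ioi I,
          (a * (x j) ^ 2 + (1 - a) * (y j) ^ 2 - a * (1 - a) * (x j - y j) ^ 2) := by
    exact Finset.sum_congr rfl fun j _ => by ring
  rw [hs, Finset.sum_sub_distrib, Finset.sum_add_distrib, ← Finset.mul_sum, ← Finset.mul_sum,
    ← Finset.mul_sum]
  ring

lemma qf_congr {c : ℝ} {I : Fin n} {x y : EuclideanSpace ℝ (Fin n)}
    (h : ∀ j, I ≤ j → x j = y j) : qf c I x = qf c I y := by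
  unfold qf
  rw [h I le_rfl]
  congr 1
  exact Finset.sum_congr rfl fun j hj => by rw [h j (le_of_lt (Finset.mem_Ioi.1 hj))]

/-- The cylinder is convex. -/
lemma convex_cyl (c r : ℝ) (I : Fin n) : Convex ℝ (Cyl n c r I) := by
  intro x hx y hy a b ha hb hab
  rw [mem_cyl] at *
  rw [qf_combo c I hab]
  have h1 : a * b * df I x y ≥ 0 := mul_nonneg (mul_nonneg ha hb) (df_nonneg I x y)
  nlinarith [mul_le_mul_of_nonneg_left hx ha, mul_le_mul_of_nonneg_left hy hb]

/-- Strict convexity conclusion: combination on boundary forces equal tail coordinates. -/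
lemma eq_of_boundary_combo {c r : ℝ} {I : Fin n} {x y : EuclideanSpace ℝ (Fin n)}
    {a b : ℝ} (ha : 0 < a) (hb : 0 < b) (hab : a + b = 1)
    (hx : qf c I x ≤ r ^ 2) (hy : qf c I y ≤ r ^ 2)
    (hcombo : qf c I (a • x + b • y) = r ^ 2) :
    ∀ j, I ≤ j → x j = y j := by
  apply df_eq_zero
  have h := qf_combo c I hab x y
  rw [hcombo] at h
  have hd := df_nonneg I x y
  nlinarith [mul_le_mul_of_nonneg_left hx ha.le, mul_le_mul_of_nonneg_left hy hb.le,
    mul_pos ha hb]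

/-- Any proper face lies on the boundary. -/
lemma face_boundary {c r : ℝ} {I : Fin n} {F : Set (EuclideanSpace ℝ (Fin n))}
    (hF : IsFace (Cyl n c r I) F) (hne : F ≠ Cyl n c r I) :
    ∀ x ∈ F, qf c I x = r ^ 2 := by
  intro x hxF
  by_contra hq
  have hxC : qf c I x ≤ r ^ 2 := mem_cyl.1 (hF.2.1 hxF)
  have hlt : qf c I x < r ^ 2 := lt_of_le_of_ne hxC hq
  apply hne
  apply Subset.antisymm hF.2.1
  intro z hz
  set S := df I x z with hS
  have hSnn := df_nonneg I x z
  set K : ℝ := |qf c I x| + |qf c I z| + 2 * S + 1 with hK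
  have hK0 : 0 < K := by positivity
  set t : ℝ := min 1 ((r ^ 2 - qf c I x) / K) with ht
  have ht0 : 0 < t := lt_min one_pos (div_pos (by linarith) hK0)
  have ht1 : t ≤ 1 := min_le_left _ _
  have ht2 : t * K ≤ r ^ 2 - qf c I x := by
    have : t ≤ (r ^ 2 - qf c I x) / K := min_le_right _ _
    calc t * K ≤ ((r ^ 2 - qf c I x) / K) * K := by nlinarith
    _ = r ^ 2 - qf c I x := by field_simp
  set w : EuclideanSpace ℝ (Fin n) := (1 + t) • x + (-t) • z with hw
  have hwq : qf c I w = (1 + t) * qf c I x + (-t) * qf c I z - (1 + t) * (-t) * S :=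
    qf_combo c I (by ring) x z
  have hwC : w ∈ Cyl n c r I := by
    rw [mem_cyl, hwq]
    have h1 : t * qf c I x ≤ t * |qf c I x| := by
      have := le_abs_self (qf c I x); nlinarith
    have h2 : - (t * qf c I z) ≤ t * |qf c I z| := by
      have := neg_abs_le (qf c I z); nlinarith
    have h3 : (1 + t) * t * S ≤ t * (2 * S) := by
      nlinarith [mul_nonneg (mul_nonneg (by linarith : (0:ℝ) ≤ 1 - t) ht0.le) hSnn]
    nlinarith
  have hseg : x ∈ openSegment ℝ z w := by
    refine ⟨t / (1 + t), 1 / (1 + t), div_pos ht0 (by linarith), by positivity, ?_, ?_⟩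
    · field_simp
      ring
    · rw [hw]
      match_scalars <;> field_simp <;> ring
  exact (hF.2.2 hz hwC hxF hseg : z ∈ F)

/-- The flat through `xb` with free coordinates `< I`. -/
def flat (I : Fin n) (xb : EuclideanSpace ℝ (Fin n)) : Set (EuclideanSpace ℝ (Fin n)) :=
  {x | ∀ j, I ≤ j → x j = xb j}

lemma df_eq_zero_of_flat {I : Fin n} {xb x : EuclideanSpace ℝ (Fin n)} (hx : x ∈ flat I xb) :
    df I x xb = 0 := by
  unfold df
  rw [hx I le_rfl, sub_self]
  rw [Finset.sum_eq_zero fun j hj => by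
    rw [hx j (le_of_lt (Finset.mem_Ioi.1 hj)), sub_self]; ring]
  ring

/-- A face containing a point contains the whole flat through it. -/
lemma flat_subset_face {c r : ℝ} {I : Fin n} {F : Set (EuclideanSpace ℝ (Fin n))}
    (hF : IsFace (Cyl n c r I) F) {x : EuclideanSpace ℝ (Fin n)} (hx : x ∈ F) :
    flat I x ⊆ F := by
  intro y hy
  have hyx : ∀ j, I ≤ j → y j = x j := hy
  have hxC : qf c I x ≤ r ^ 2 := mem_cyl.1 (hF.2.1 hx)
  have hyC : y ∈ Cyl n c r I := by rw [mem_cyl, qf_congr hyx]; exact hxC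
  set w : EuclideanSpace ℝ (Fin n) := (2 : ℝ) • x - y with hw
  have hwx : ∀ j, I ≤ j → w j = x j := by
    intro j hj
    rw [hw]
    simp only [PiLp.sub_apply, PiLp.smul_apply, smul_eq_mul, hyx j hj]
    ring
  have hwC : w ∈ Cyl n c r I := by rw [mem_cyl, qf_congr hwx]; exact hxC
  have hseg : x ∈ openSegment ℝ y w := by
    refine ⟨1/2, 1/2, by norm_num, by norm_num, by norm_num, ?_⟩
    rw [hw]; match_scalars <;> ring
  exact hF.2.2 hyC hwC hx hseg

/-- Classification of proper nonempty faces. -/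
lemma face_classify {c r : ℝ} {I : Fin n} {F : Set (EuclideanSpace ℝ (Fin n))}
    (hF : IsFace (Cyl n c r I) F) (hFne : F.Nonempty) (hne : F ≠ Cyl n c r I) :
    ∃ xb, qf c I xb = r ^ 2 ∧ F = flat I xb := by
  obtain ⟨xb, hxb⟩ := hFne
  have hbd := face_boundary hF hne
  refine ⟨xb, hbd xb hxb, ?_⟩
  apply Subset.antisymm
  · intro x hx
    have hm : (1/2 : ℝ) • x + (1/2 : ℝ) • xb ∈ F :=
      hF.1 hx hxb (by norm_num) (by norm_num) (by norm_num)
    exact eq_of_boundary_combo (by norm_num) (by norm_num) (by norm_num)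
      (le_of_eq (hbd x hx)) (le_of_eq (hbd xb hxb)) (hbd _ hm)
  · exact flat_subset_face hF hxb

lemma flat_convex (I : Fin n) (xb : EuclideanSpace ℝ (Fin n)) : Convex ℝ (flat I xb) := by
  intro x hx y hy a b _ _ hab j hj
  simp only [PiLp.add_apply, PiLp.smul_apply, smul_eq_mul, hx j hj, hy j hj]
  rw [← add_mul, hab, one_mul]

/-- The exposing functional's vector. -/
noncomputable def expVec (c : ℝ) (I : Fin n) (xb : EuclideanSpace ℝ (Fin n)) :
    EuclideanSpace ℝ (Fin n) :=
  WithLp.toLp 2 (fun j => if j = I then xb I + c else if I < j then xb j else 0)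

lemma expVec_inner (c : ℝ) (I : Fin n) (xb y : EuclideanSpace ℝ (Fin n)) :
    ⟪expVec c I xb, y⟫ = (xb I + c) * y I + ∑ j ∈ Finset.Ioi I, xb j * y j := by
  rw [PiLp.inner_apply]
  simp only [RCLike.inner_apply, conj_trivial]
  rw [← Finset.sum_subset (Finset.subset_univ (Finset.Ici I)) (by
    intro j _ hj
    have : ¬ I ≤ j := by simpa [Finset.mem_Ici] using hj
    have h1 : j ≠ I := fun h => this (le_of_eq h.symm)
    have h2 : ¬ I < j := fun h => this h.le
    simp [expVec, h1, h2])]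
  rw [Finset.Ici_eq_cons_Ioi, Finset.sum_cons]
  congr 1
  · simp [expVec, mul_comm]
  · refine Finset.sum_congr rfl fun j hj => ?_
    have h1 : j ≠ I := ne_of_gt (Finset.mem_Ioi.1 hj)
    have h2 : I < j := Finset.mem_Ioi.1 hj
    simp [expVec, h1, h2, mul_comm]

/-- The key inner-product identity. -/
lemma inner_identity (c : ℝ) (I : Fin n) (xb y : EuclideanSpace ℝ (Fin n)) :
    2 * (⟪expVec c I xb, y⟫ + c * (xb I + c)) = qf c I xb + qf c I y - df I xb y := by
  rw [expVec_inner]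
  unfold qf df
  have hs : ∑ j ∈ Finset.Ioi I, (xb j - y j) ^ 2
      = ∑ j ∈ Finset.Ioi I, ((xb j)^2 + (y j)^2 - 2 * (xb j * y j)) := by
    exact Finset.sum_congr rfl fun j _ => by ring
  rw [hs, Finset.sum_sub_distrib, Finset.sum_add_distrib, ← Finset.mul_sum]
  ring

/-- Flats through boundary points are exposed faces. -/
lemma flat_exposed {c r : ℝ} {I : Fin n} {xb : EuclideanSpace ℝ (Fin n)}
    (hxb : qf c I xb = r ^ 2) : IsExposed ℝ (Cyl n c r I) (flat I xb) := by
  intro _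
  refine ⟨(innerSL ℝ) (expVec c I xb), ?_⟩
  have key : ∀ y, 2 * (⟪expVec c I xb, y⟫ + c * (xb I + c)) = r ^ 2 + qf c I y - df I xb y := by
    intro y; rw [inner_identity, hxb]
  have hxbC : xb ∈ Cyl n c r I := mem_cyl.2 (le_of_eq hxb)
  have hub : ∀ y ∈ Cyl n c r I, ⟪expVec c I xb, y⟫ ≤ r ^ 2 - c * (xb I + c) := by
    intro y hy
    have h := key y
    have := df_nonneg I xb y
    have := mem_cyl.1 hy
    simp only [innerSL_apply_apply] at *
    linarith
  ext x
  constructor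
  · intro hx
    have hdx : df I xb x = 0 := by
      have := df_eq_zero_of_flat (xb := xb) (x := x) hx
      unfold df at this ⊢
      rw [← this]
      congr 1
      · ring_nf
      · exact Finset.sum_congr rfl fun j _ => by ring
    have hqx : qf c I x = r ^ 2 := by
      rw [qf_congr (fun j hj => (hx j hj : x j = xb j))]; exact hxb
    have hlx : ⟪expVec c I xb, x⟫ = r ^ 2 - c * (xb I + c) := by
      have h := key x; rw [hdx, hqx] at h; linarith
    refine ⟨mem_cyl.2 (le_of_eq hqx), fun y hy => ?_⟩
    simp only [innerSL_apply_apply]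
    rw [hlx]
    exact hub y hy
  · rintro ⟨hxC, hmax⟩
    have h1 : ⟪expVec c I xb, xb⟫ = r ^ 2 - c * (xb I + c) := by
      have h := key xb
      have : df I xb xb = 0 := by unfold df; simp
      rw [this] at h; linarith
    have h2 : ⟪expVec c I xb, xb⟫ ≤ ⟪expVec c I xb, x⟫ := by
      have := hmax xb hxbC
      simpa using this
    have h3 := key x
    have h4 := mem_cyl.1 hxC
    have h5 : df I xb x ≤ 0 := by
      simp only [innerSL_apply_apply] at *
      linarith [hub x hxC]
    have h6 : df I xb x = 0 := le_antisymm h5 (df_nonneg I xb x)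
    intro j hj
    exact (df_eq_zero h6 j hj).symm

/-- The direction submodule of a flat. -/
def flatV (I : Fin n) : Submodule ℝ (EuclideanSpace ℝ (Fin n)) where
  carrier := {v | ∀ j, I ≤ j → v j = 0}
  add_mem' := by
    intro a b ha hb j hj
    simp only [PiLp.add_apply, ha j hj, hb j hj, add_zero]
  zero_mem' := by intro j hj; rfl
  smul_mem' := by
    intro t a ha j hj
    simp only [PiLp.smul_apply, ha j hj, smul_eq_mul, mul_zero]

/-- Basis vectors of the flat direction. -/
noncomputable def fvec (I : Fin n) (k : Fin I.val) : EuclideanSpace ℝ (Fin n) :=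
  EuclideanSpace.single (Fin.castLE I.isLt.le k) 1

lemma fvec_li (I : Fin n) : LinearIndependent ℝ (fvec I) := by
  have h : fvec I = (EuclideanSpace.basisFun (Fin n) ℝ).toBasis ∘ Fin.castLE I.isLt.le := by
    funext k
    simp [fvec, OrthonormalBasis.coe_toBasis, EuclideanSpace.basisFun_apply]
  rw [h]
  exact (EuclideanSpace.basisFun (Fin n) ℝ).toBasis.linearIndependent.comp _
    (Fin.castLE_injective _)

lemma fvec_mem (I : Fin n) (k : Fin I.val) : fvec I k ∈ flatV I := by
  intro j hj
  rw [fvec, EuclideanSpace.single_apply]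
  have : j ≠ Fin.castLE I.isLt.le k := by
    intro h
    have : (j : ℕ) = (k : ℕ) := by rw [h]; rfl
    have hk := k.isLt
    have hIj : (I : ℕ) ≤ (j : ℕ) := hj
    omega
  simp [this]

lemma flatV_span (I : Fin n) : Submodule.span ℝ (Set.range (fvec I)) = flatV I := by
  apply le_antisymm
  · rw [Submodule.span_le]
    rintro _ ⟨k, rfl⟩
    exact fvec_mem I k
  · intro v hv
    have hdec : v = ∑ k : Fin I.val, v (Fin.castLE I.isLt.le k) • fvec I k := by
      ext j
      have hrhs : (∑ k : Fin I.val, v (Fin.castLE I.isLt.le k) • fvec I k) j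
          = ∑ k : Fin I.val, v (Fin.castLE I.isLt.le k) * (fvec I k) j := by
        rw [show (∑ k : Fin I.val, v (Fin.castLE I.isLt.le k) • fvec I k) j
            = EuclideanSpace.proj (𝕜 := ℝ) j (∑ k : Fin I.val,
                v (Fin.castLE I.isLt.le k) • fvec I k) from rfl, map_sum]
        exact Finset.sum_congr rfl fun k _ => by
          rw [map_smul]; rfl
      rw [hrhs]
      by_cases hj : (j : ℕ) < I.val
      · rw [Finset.sum_eq_single ⟨(j : ℕ), hj⟩]
        · have hcast : Fin.castLE I.isLt.le ⟨(j : ℕ), hj⟩ = j := by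
            apply Fin.ext; rfl
          rw [hcast, fvec, hcast, EuclideanSpace.single_apply]
          simp
        · intro k _ hk
          have : j ≠ Fin.castLE I.isLt.le k := by
            intro h
            apply hk
            apply Fin.ext
            have : (j : ℕ) = (k : ℕ) := by rw [h]; rfl
            simpa using this.symm
          rw [fvec, EuclideanSpace.single_apply]
          simp [this]
        · intro h
          exact absurd (Finset.mem_univ _) h
      · have hIj : I ≤ j := by
          rw [Fin.le_def]; omega
        rw [hv j hIj]
        rw [Finset.sum_eq_zero]
        intro k _
        have : j ≠ Fin.castLE I.isLt.le k := by
          intro h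
          have : (j : ℕ) = (k : ℕ) := by rw [h]; rfl
          have := k.isLt
          omega
        rw [fvec, EuclideanSpace.single_apply]
        simp [this]
    rw [hdec]
    exact Submodule.sum_mem _ fun k _ =>
      Submodule.smul_mem _ _ (Submodule.subset_span (Set.mem_range_self k))

lemma finrank_flatV (I : Fin n) : Module.finrank ℝ (flatV I) = I.val := by
  rw [← flatV_span]
  rw [finrank_span_eq_card (fvec_li I)]
  simp

lemma flat_eq_affine (I : Fin n) (xb : EuclideanSpace ℝ (Fin n)) :
    flat I xb = (AffineSubspace.mk' xb (flatV I) : Set (EuclideanSpace ℝ (Fin n))) := by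
  ext x
  rw [SetLike.mem_coe, AffineSubspace.mem_mk']
  constructor
  · intro hx j hj
    simp only [vsub_eq_sub, PiLp.sub_apply]
    rw [hx j hj, sub_self]
  · intro hx j hj
    have := hx j hj
    simp only [vsub_eq_sub, PiLp.sub_apply] at this
    linarith

lemma sdim_flat (I : Fin n) (xb : EuclideanSpace ℝ (Fin n)) : sdim (flat I xb) = I.val := by
  rw [sdim, flat_eq_affine, AffineSubspace.affineSpan_coe, AffineSubspace.direction_mk',
    finrank_flatV]

lemma zero_mem_cyl {c r : ℝ} (I : Fin n) (hc : 0 < c) (hrc : c < r) :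
    (0 : EuclideanSpace ℝ (Fin n)) ∈ Cyl n c r I := by
  rw [mem_cyl, qf]
  have : ∑ j ∈ Finset.Ioi I, ((0 : EuclideanSpace ℝ (Fin n)) j) ^ 2 = 0 :=
    Finset.sum_eq_zero fun j _ => by norm_num [PiLp.zero_apply]
  rw [this]
  simp only [PiLp.zero_apply]
  nlinarith

/-- The cylinder is full-dimensional. -/
lemma sdim_cyl {c r : ℝ} (I : Fin n) (hc : 0 < c) (hrc : c < r) :
    sdim (Cyl n c r I) = n := by
  have hr0 : (0 : ℝ) < r := lt_trans hc hrc
  set t : ℝ := (r - c) / 2 with ht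
  have ht0 : 0 < t := by rw [ht]; linarith
  have h0 := zero_mem_cyl I hc hrc
  have hsing : ∀ j : Fin n, EuclideanSpace.single j t ∈ Cyl n c r I := by
    intro j
    rw [mem_cyl, qf]
    have hsum : ∑ k ∈ Finset.Ioi I, (EuclideanSpace.single j t k) ^ 2
        = if j ∈ Finset.Ioi I then t ^ 2 else 0 := by
      simp only [EuclideanSpace.single_apply]
      rw [Finset.sum_congr rfl (fun k _ => by
        rw [show ((if k = j then t else 0) ^ 2) = (if k = j then t ^ 2 else 0) from by
          split <;> ring])]
      rw [Finset.sum_ite_eq' (Finset.Ioi I) j fun _ => t ^ 2]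
    rw [hsum, EuclideanSpace.single_apply]
    by_cases hj : I = j
    · subst hj
      rw [if_pos rfl, if_neg (by simp : I ∉ Finset.Ioi I), add_zero, ht]
      nlinarith
    · rw [if_neg hj]
      split <;> nlinarith
  have hdir : (affineSpan ℝ (Cyl n c r I)).direction = ⊤ := by
    rw [eq_top_iff]
    rw [← (EuclideanSpace.basisFun (Fin n) ℝ).toBasis.span_eq]
    rw [Submodule.span_le]
    rintro _ ⟨j, rfl⟩
    have hmem : EuclideanSpace.single j t -ᵥ (0 : EuclideanSpace ℝ (Fin n))
        ∈ (affineSpan ℝ (Cyl n c r I)).direction :=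
      AffineSubspace.vsub_mem_direction (subset_affineSpan ℝ _ (hsing j))
        (subset_affineSpan ℝ _ h0)
    rw [vsub_eq_sub, sub_zero] at hmem
    have : (EuclideanSpace.basisFun (Fin n) ℝ).toBasis j = t⁻¹ • EuclideanSpace.single j t := by
      rw [OrthonormalBasis.coe_toBasis, EuclideanSpace.basisFun_apply]
      ext k
      simp only [PiLp.smul_apply, EuclideanSpace.single_apply, smul_eq_mul]
      split
      · field_simp
      · ring
    rw [this]
    exact Submodule.smul_mem _ _ hmem
  rw [sdim, hdir, finrank_top, finrank_euclideanSpace_fin]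

end CylAux

theorem faces_of_cylinder {n : ℕ} (hn : 2 ≤ n) (i : ℕ) (hi1 : 1 ≤ i) (hin : i < n)
    (c r : ℝ) (hc : 0 < c) (hr0 : 0 < r) (hrc : c < r) :
    faceDimSig (Cyl n c r ⟨i, hin⟩) = {i, n} ∧
    ∀ F : Set (EuclideanSpace ℝ (Fin n)),
      IsFace (Cyl n c r ⟨i, hin⟩) F → F.Nonempty → F ≠ Cyl n c r ⟨i, hin⟩ →
      (∃ xb : EuclideanSpace ℝ (Fin n),
        (xb ⟨i, hin⟩ + c) ^ 2 + ∑ j ∈ Finset.Ioi (⟨i, hin⟩ : Fin n), (xb j) ^ 2 = r ^ 2 ∧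
        F = {x | ∀ j : Fin n, i ≤ (j : ℕ) → x j = xb j}) ∧
      IsExposed ℝ (Cyl n c r ⟨i, hin⟩) F := by
  set I : Fin n := ⟨i, hin⟩ with hI
  have hIv : (I : ℕ) = i := rfl
  have hflat_eq : ∀ xb : EuclideanSpace ℝ (Fin n),
      CylAux.flat I xb = {x | ∀ j : Fin n, i ≤ (j : ℕ) → x j = xb j} := by
    intro xb
    ext x
    constructor
    · intro hx j hj
      exact hx j (by rw [Fin.le_def]; exact hj)
    · intro hx j hj
      exact hx j (by rw [Fin.le_def] at hj; exact hj)
  constructor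
  · ext d
    simp only [faceDimSig, Set.mem_setOf_eq, Set.mem_insert_iff, Set.mem_singleton_iff]
    constructor
    · rintro ⟨F, hF, hFne, rfl⟩
      by_cases hFC : F = Cyl n c r I
      · right
        rw [hFC]
        exact CylAux.sdim_cyl I hc hrc
      · left
        obtain ⟨xb, _, hFeq⟩ := CylAux.face_classify hF hFne hFC
        rw [hFeq, CylAux.sdim_flat]
    · rintro (hd | hd)
      · -- a flat face of dimension i
        set xb : EuclideanSpace ℝ (Fin n) := EuclideanSpace.single I (r - c) with hxb
        have hq : CylAux.qf c I xb = r ^ 2 := by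
          rw [CylAux.qf, hxb]
          rw [Finset.sum_eq_zero (fun j hj => by
            rw [EuclideanSpace.single_apply, if_neg (Finset.mem_Ioi.1 hj).ne']
            ring)]
          rw [EuclideanSpace.single_apply, if_pos rfl]
          ring
        refine ⟨CylAux.flat I xb, ⟨CylAux.flat_convex I xb,
          (CylAux.flat_exposed hq).isExtreme⟩, ⟨xb, fun j _ => rfl⟩, ?_⟩
        rw [CylAux.sdim_flat, hd]
      · exact ⟨Cyl n c r I, ⟨CylAux.convex_cyl c r I, IsExtreme.rfl⟩,
          ⟨0, CylAux.zero_mem_cyl I hc hrc⟩, by rw [CylAux.sdim_cyl I hc hrc, hd]⟩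
  · intro F hF hFne hne
    obtain ⟨xb, hqb, hFeq⟩ := CylAux.face_classify hF hFne hne
    constructor
    · exact ⟨xb, hqb, by rw [hFeq, hflat_eq]⟩
    · rw [hFeq]
      exact CylAux.flat_exposed hqb
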